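/- Let Q_n = [−1,1]^n and let X, Y be independent random vectors uniformly distributed on Q_n. Then E‖X+Y‖_{Q_n} = 2 − (2/(2n+1)) · 4^n · binom(2n,n)^{−1}. -/

import Mathlib

open MeasureTheory Pointwise ENNReal NNReal Set


lemma prod_range_asc (n : ℕ) : ∀ k, (∏ j ∈ Finset.range k, (n + 1 + j)) = (n+1).ascFactorial k
  | 0 => by simp
  | (k+1) => by
      rw [Finset.prod_range_succ, prod_range_asc n k, Nat.ascFactorial_succ]
      ring

lemma beta_nat (n : ℕ) :
    ∫ x in (0:ℝ)..1, x ^ n * (1 - x) ^ n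
      = (n.factorial * n.factorial : ℝ) / (2 * n + 1).factorial := by
  have h := Complex.betaIntegral_eval_nat_add_one_right
    (u := (n : ℂ) + 1) (by simp; positivity) n
  rw [Complex.betaIntegral] at h
  have hint : (∫ x in (0:ℝ)..1, (x:ℂ) ^ ((n:ℂ)+1-1) * (1-(x:ℂ)) ^ ((n:ℂ)+1-1))
      = ((∫ x in (0:ℝ)..1, x ^ n * (1 - x) ^ n : ℝ) : ℂ) := by
    rw [← intervalIntegral.integral_ofReal]
    apply intervalIntegral.integral_congr
    intro x hx
    have h1 : ((1:ℂ) - (x:ℂ)) = ((1 - x : ℝ) : ℂ) := by push_cast; ring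
    simp only [add_sub_cancel_right, h1, Complex.cpow_natCast]
    push_cast; ring
  rw [hint] at h
  have hprod : (∏ j ∈ Finset.range (n + 1), ((n:ℂ) + 1 + (j:ℂ)))
      = (((n+1).ascFactorial (n+1) : ℕ) : ℂ) := by
    rw [← prod_range_asc n (n+1)]
    push_cast; apply Finset.prod_congr rfl; intro j _; ring
  rw [hprod, _root_.eq_div_iff (by exact_mod_cast (Nat.ascFactorial_pos n (n+1)).ne')] at h
  have e3 : (n.factorial * ((n+1).ascFactorial (n+1)) : ℕ) = (2*n+1).factorial := by
    rw [Nat.factorial_mul_ascFactorial]; congr 1; ring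
  have hre := congrArg Complex.re h
  simp only [← Complex.ofReal_natCast, ← Complex.ofReal_mul, Complex.ofReal_re] at hre
  rw [eq_div_iff (by positivity : ((2*n+1).factorial : ℝ) ≠ 0), ← e3]
  push_cast
  nlinarith [hre]

lemma kint (n : ℕ) :
    ∫ t in (0:ℝ)..2, (t * (4 - t) / 4) ^ n
      = (2 / (2 * n + 1)) * 4 ^ n * ((2 * n).choose n : ℝ)⁻¹ := by
  set f : ℝ → ℝ := fun t => (t * (4 - t) / 4) ^ n with hf
  have hcont : Continuous f := by fun_prop
  have h04 : ∫ t in (0:ℝ)..4, f t = 4 * 4 ^ n *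
      ((n.factorial * n.factorial : ℝ) / (2 * n + 1).factorial) := by
    have := intervalIntegral.integral_comp_mul_left (a := (0:ℝ)) (b := 1) f
      (c := 4) (by norm_num)
    simp only [mul_zero, mul_one] at this
    have h2 : (∫ x in (0:ℝ)..1, f (4 * x)) = 4 ^ n * ∫ x in (0:ℝ)..1, x ^ n * (1 - x) ^ n := by
      rw [← intervalIntegral.integral_const_mul]
      apply intervalIntegral.integral_congr
      intro x _
      simp only [hf]
      rw [show 4 * x * (4 - 4 * x) / 4 = 4 * (x * (1 - x)) by ring, mul_pow, mul_pow]
    rw [h2, beta_nat] at this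
    rw [smul_eq_mul] at this
    linarith [this]
  have hsplit : (∫ t in (0:ℝ)..2, f t) + (∫ t in (2:ℝ)..4, f t) = ∫ t in (0:ℝ)..4, f t :=
    intervalIntegral.integral_add_adjacent_intervals
      (hcont.intervalIntegrable _ _) (hcont.intervalIntegrable _ _)
  have hsym : (∫ t in (2:ℝ)..4, f t) = ∫ t in (0:ℝ)..2, f t := by
    have h := intervalIntegral.integral_comp_sub_left (a := (0:ℝ)) (b := 2) f 4
    rw [show (4:ℝ) - 2 = 2 by norm_num, show (4:ℝ) - 0 = 4 by norm_num] at h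
    rw [← h]
    apply intervalIntegral.integral_congr
    intro x _
    simp only [hf]
    congr 1
    ring
  have key : (∫ t in (0:ℝ)..2, f t)
      = 2 * 4 ^ n * ((n.factorial * n.factorial : ℝ) / (2 * n + 1).factorial) := by
    rw [hsym] at hsplit
    linarith [hsplit, h04]
  have hchn : (2*n).choose n * (n.factorial * n.factorial) = (2*n).factorial := by
    have h := Nat.choose_mul_factorial_mul_factorial (show n ≤ 2*n by omega)
    rw [show 2*n - n = n by omega] at h
    rw [← h]; ring
  have hfact2 : ((2*n+1).factorial : ℝ)
      = (2 * (n:ℝ) + 1) * (((2*n).choose n : ℝ) * ((n.factorial : ℝ) * (n.factorial : ℝ))) := by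
    rw [Nat.factorial_succ (2*n), ← hchn]
    push_cast
    ring
  have hne1 : ((2*n).choose n : ℝ) ≠ 0 := by
    exact_mod_cast (Nat.choose_pos (by omega : n ≤ 2*n)).ne'
  have hne2 : ((n.factorial : ℝ)) ≠ 0 := by exact_mod_cast n.factorial_ne_zero
  have hne4 : (2 * (n:ℝ) + 1) ≠ 0 := by positivity
  rw [key, hfact2]
  field_simp

lemma II_integral_id {a b : ℝ} : ∫ x in a..b, x = (b ^ 2 - a ^ 2) / 2 := integral_id

noncomputable def nu : Measure ℝ := (2 : ENNReal)⁻¹ • volume.restrict (Icc (-1) 1)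

instance : IsProbabilityMeasure nu := by
  constructor
  rw [nu, Measure.smul_apply, Measure.restrict_apply MeasurableSet.univ, univ_inter,
    Real.volume_Icc, smul_eq_mul]
  norm_num
  exact ENNReal.inv_mul_cancel (by norm_num) (by norm_num)

lemma measurable_S (t : ℝ) : MeasurableSet {p : ℝ × ℝ | |p.1 + p.2| ≤ t} := by
  have : Continuous fun p : ℝ × ℝ => |p.1 + p.2| := by fun_prop
  exact (isClosed_le this continuous_const).measurableSet
  
lemma slice_eq (t x : ℝ) : (Prod.mk x ⁻¹' {p : ℝ × ℝ | |p.1 + p.2| ≤ t}) = Icc (-t - x) (t - x) := by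
  ext y
  simp only [mem_preimage, mem_setOf_eq, mem_Icc, abs_le]
  constructor <;> intro h <;> constructor <;> linarith [h.1, h.2]

lemma min_integral (t : ℝ) (ht : t ∈ Icc (0:ℝ) 2) :
    ∫ x in (-1:ℝ)..1, min (t + x) 1 = t * (4 - t) / 2 := by
  have h1 : (-1:ℝ) ≤ 1 - t := by linarith [ht.2]
  have h2 : (1:ℝ) - t ≤ 1 := by linarith [ht.1]
  have hcont : Continuous fun x : ℝ => min (t + x) 1 := by fun_prop
  have hsplit : (∫ x in (-1:ℝ)..(1-t), min (t + x) 1) + (∫ x in (1-t)..1, min (t + x) 1)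
      = ∫ x in (-1:ℝ)..1, min (t + x) 1 :=
    intervalIntegral.integral_add_adjacent_intervals
      (hcont.intervalIntegrable _ _) (hcont.intervalIntegrable _ _)
  have e1 : (∫ x in (-1:ℝ)..(1-t), min (t + x) 1) = ∫ x in (-1:ℝ)..(1-t), (t + x) := by
    apply intervalIntegral.integral_congr
    intro x hx
    rw [uIcc_of_le h1, mem_Icc] at hx
    exact min_eq_left (by linarith [hx.2])
  have e2 : (∫ x in (1-t:ℝ)..1, min (t + x) 1) = ∫ x in (1-t:ℝ)..1, (1:ℝ) := by
    apply intervalIntegral.integral_congr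
    intro x hx
    rw [uIcc_of_le h2, mem_Icc] at hx
    exact min_eq_right (by linarith [hx.1])
  have v1 : (∫ x in (-1:ℝ)..(1-t), (t + x)) = t * (2 - t) + ((1-t)^2 - 1)/2 := by
    rw [intervalIntegral.integral_add intervalIntegrable_const intervalIntegral.intervalIntegrable_id,
      intervalIntegral.integral_const, II_integral_id]
    simp only [smul_eq_mul]
    ring
  have v2 : (∫ x in (1-t:ℝ)..1, (1:ℝ)) = t := by
    simp [intervalIntegral.integral_const]
  rw [e1, e2, v1, v2] at hsplit
  rw [← hsplit]
  ring

lemma nu_prod_apply (t : ℝ) (ht : t ∈ Icc (0:ℝ) 2) :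
    (nu.prod nu) {p : ℝ × ℝ | |p.1 + p.2| ≤ t} = ENNReal.ofReal (t * (4 - t) / 4) := by
  set g : ℝ → ℝ := fun x => min (t - x) 1 + min (t + x) 1 with hg
  have hslice : ∀ x : ℝ, nu (Prod.mk x ⁻¹' {p : ℝ × ℝ | |p.1 + p.2| ≤ t})
      = 2⁻¹ * ENNReal.ofReal (g x) := by
    intro x
    rw [slice_eq, nu, Measure.smul_apply, Measure.restrict_apply measurableSet_Icc,
      Icc_inter_Icc, Real.volume_Icc, smul_eq_mul]
    congr 1
    have hmax : max (-t - x) (-1) = -min (t + x) 1 := by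
      rcases le_total (t + x) 1 with h | h
      · rw [min_eq_left h, max_eq_left (by linarith)]; try ring
      · rw [min_eq_right h, max_eq_right (by linarith)]; try ring
    have : min (t - x) 1 - max (-t - x) (-1) = g x := by
      simp only [hg, hmax]
      ring
    rw [← this]
  rw [Measure.prod_apply (measurable_S t), lintegral_congr (fun x => hslice x), nu,
    lintegral_smul_measure, lintegral_const_mul' _ _ (by norm_num)]
  have hgcont : Continuous g := by fun_prop
  have hgint : IntegrableOn g (Icc (-1) 1) volume := hgcont.integrableOn_Icc
  have hgnn : 0 ≤ᵐ[volume.restrict (Icc (-1:ℝ) 1)] g := by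
    refine (ae_restrict_iff' measurableSet_Icc).mpr (Filter.Eventually.of_forall fun x hx => ?_)
    rw [mem_Icc] at hx
    rw [hg]
    simp only [Pi.zero_apply]
    rcases le_total (t - x) 1 with h1 | h1 <;> rcases le_total (t + x) 1 with h2 | h2 <;>
      [rw [min_eq_left h1, min_eq_left h2]; rw [min_eq_left h1, min_eq_right h2];
       rw [min_eq_right h1, min_eq_left h2]; rw [min_eq_right h1, min_eq_right h2]] <;>
      linarith [ht.1, ht.2, hx.1, hx.2]
  rw [← ofReal_integral_eq_lintegral_ofReal hgint hgnn]
  have hval : ∫ x in Icc (-1:ℝ) 1, g x = t * (4 - t) := by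
    rw [integral_Icc_eq_integral_Ioc, ← intervalIntegral.integral_of_le (by norm_num : (-1:ℝ) ≤ 1)]
    have hsplit : (∫ x in (-1:ℝ)..1, g x)
        = (∫ x in (-1:ℝ)..1, min (t - x) 1) + ∫ x in (-1:ℝ)..1, min (t + x) 1 := by
      rw [hg, ← intervalIntegral.integral_add
        ((by fun_prop : Continuous fun x : ℝ => min (t - x) 1).intervalIntegrable _ _)
        ((by fun_prop : Continuous fun x : ℝ => min (t + x) 1).intervalIntegrable _ _)]
    have hneg : (∫ x in (-1:ℝ)..1, min (t - x) 1) = ∫ x in (-1:ℝ)..1, min (t + x) 1 := by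
      have := intervalIntegral.integral_comp_neg (a := (-1:ℝ)) (b := 1)
        (fun y => min (t + y) 1)
      rw [show -(1:ℝ) = -1 by norm_num, show -(-1:ℝ) = 1 by norm_num] at this
      rw [← this]
      apply intervalIntegral.integral_congr
      intro x _
      simp [sub_eq_add_neg]
    rw [hsplit, hneg, min_integral t ht]
    ring
  rw [hval]
  rw [show t * (4 - t) / 4 = (t * (4-t)) / 4 by ring,
    ENNReal.ofReal_div_of_pos (by norm_num), ENNReal.ofReal_ofNat]
  rw [ENNReal.div_eq_inv_mul]
  rw [show ((4:ENNReal))⁻¹ = 2⁻¹ * 2⁻¹ by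
    rw [← ENNReal.mul_inv (by norm_num) (by norm_num)]; norm_num]
  ring

lemma nu_prod_apply_ge2 (t : ℝ) (h2t : 2 ≤ t) :
    (nu.prod nu) {p : ℝ × ℝ | |p.1 + p.2| ≤ t} = 1 := by
  have hub : (nu.prod nu) {p : ℝ × ℝ | |p.1 + p.2| ≤ t} ≤ 1 := prob_le_one
  have hsub : (Icc (-1:ℝ) 1) ×ˢ (Icc (-1:ℝ) 1) ⊆ {p : ℝ × ℝ | |p.1 + p.2| ≤ t} := by
    rintro ⟨x, y⟩ ⟨hx, hy⟩
    simp only [mem_setOf_eq]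
    rw [mem_Icc] at hx hy
    rw [abs_le]
    constructor <;> linarith [hx.1, hx.2, hy.1, hy.2]
  have : (1:ENNReal) ≤ (nu.prod nu) {p : ℝ × ℝ | |p.1 + p.2| ≤ t} := by
    have := measure_mono (μ := nu.prod nu) hsub
    rw [Measure.prod_prod] at this
    have hIcc : nu (Icc (-1:ℝ) 1) = 1 := by
      rw [nu, Measure.smul_apply, Measure.restrict_apply measurableSet_Icc, inter_self,
        Real.volume_Icc, smul_eq_mul, show (1:ℝ) - (-1) = 2 by norm_num]
      norm_num
      exact ENNReal.inv_mul_cancel (by norm_num) (by norm_num)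
    rw [hIcc, one_mul] at this
    exact this
  exact le_antisymm hub this

lemma nu_Icc : nu (Icc (-1:ℝ) 1) = 1 := by
  rw [nu, Measure.smul_apply, Measure.restrict_apply measurableSet_Icc, inter_self,
    Real.volume_Icc, smul_eq_mul, show (1:ℝ) - (-1) = 2 by norm_num]
  norm_num
  exact ENNReal.inv_mul_cancel (by norm_num) (by norm_num)

lemma gauge_seminorm_le_one {E : Type*} [AddCommGroup E] [Module ℝ E]
    (p : Seminorm ℝ E) (x : E) : gauge {y | p y ≤ 1} x = p x := by
  have hmem : ∀ r : ℝ, 0 < r → (x ∈ r • {y | p y ≤ 1} ↔ p x ≤ r) := by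
    intro r hr
    constructor
    · rintro ⟨y, hy, rfl⟩
      rw [map_smul_eq_mul, Real.norm_eq_abs, abs_of_pos hr]
      exact mul_le_of_le_one_right hr.le hy
    · intro hle
      refine ⟨r⁻¹ • x, ?_, smul_inv_smul₀ hr.ne' _⟩
      rw [mem_setOf_eq, map_smul_eq_mul, Real.norm_eq_abs, abs_of_pos (inv_pos.2 hr),
        inv_mul_le_iff₀ hr, mul_one]
      exact hle
  apply le_antisymm
  · refine le_of_forall_pos_le_add fun ε hε => ?_
    refine csInf_le ⟨0, fun r hr => hr.1.le⟩ ⟨by positivity, ?_⟩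
    exact (hmem _ (by positivity)).2 (by linarith)
  · refine le_csInf ⟨p x + 1, by positivity, (hmem _ (by positivity)).2 (by linarith)⟩ ?_
    rintro r ⟨hr, hmem'⟩
    exact (hmem r hr).1 hmem'

noncomputable def supSeminorm (n : ℕ) : Seminorm ℝ (EuclideanSpace ℝ (Fin n)) :=
  (normSeminorm ℝ (Fin n → ℝ)).comp (WithLp.linearEquiv 2 ℝ (Fin n → ℝ)).toLinearMap

lemma supSeminorm_apply (n : ℕ) (x : EuclideanSpace ℝ (Fin n)) :
    supSeminorm n x = ‖(WithLp.equiv 2 (Fin n → ℝ)) x‖ := rfl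

lemma supSeminorm_le_iff (n : ℕ) (x : EuclideanSpace ℝ (Fin n)) (t : ℝ) (ht : 0 ≤ t) :
    supSeminorm n x ≤ t ↔ ∀ i, |x i| ≤ t := by
  rw [supSeminorm_apply, pi_norm_le_iff_of_nonneg ht]
  exact Iff.rfl

lemma gauge_cube (n : ℕ) (Q : Set (EuclideanSpace ℝ (Fin n)))
    (hQ : Q = {x : EuclideanSpace ℝ (Fin n) | ∀ i, |x i| ≤ 1}) (x : EuclideanSpace ℝ (Fin n)) :
    gauge Q x = supSeminorm n x := by
  have : Q = {y | supSeminorm n y ≤ 1} := by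
    rw [hQ]; ext y; rw [mem_setOf_eq, mem_setOf_eq, supSeminorm_le_iff n y 1 zero_le_one]
  rw [this, gauge_seminorm_le_one]

lemma continuous_supSeminorm (n : ℕ) : Continuous (supSeminorm n) := by
  show Continuous fun x : EuclideanSpace ℝ (Fin n) => ‖(WithLp.equiv 2 (Fin n → ℝ)) x‖
  exact continuous_norm.comp (PiLp.continuous_ofLp 2 (fun _ : Fin n => ℝ))

section Main

variable (n : ℕ)

local notation "E" => EuclideanSpace ℝ (Fin n)

-- the cube as preimage
lemma cube_preimage (Q : Set (EuclideanSpace ℝ (Fin n)))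
    (hQ : Q = {x : EuclideanSpace ℝ (Fin n) | ∀ i, |x i| ≤ 1}) :
    Q = ((MeasurableEquiv.toLp 2 (Fin n → ℝ)).symm) ⁻¹' (univ.pi fun _ => Icc (-1:ℝ) 1) := by
  rw [hQ]
  ext x
  simp only [mem_setOf_eq, mem_preimage, mem_pi, mem_univ, forall_true_left, mem_Icc]
  constructor
  · intro h i
    exact abs_le.mp (h i)
  · intro h i
    exact abs_le.mpr (h i)

lemma volume_cube (Q : Set (EuclideanSpace ℝ (Fin n)))
    (hQ : Q = {x : EuclideanSpace ℝ (Fin n) | ∀ i, |x i| ≤ 1}) :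
    volume Q = 2 ^ n := by
  rw [cube_preimage n Q hQ,
    (EuclideanSpace.volume_preserving_symm_measurableEquiv_toLp (ι := Fin n)).measure_preimage
      (MeasurableSet.univ_pi fun _ => measurableSet_Icc).nullMeasurableSet,
    volume_pi_pi]
  have h2 : volume (Icc (-1:ℝ) 1) = 2 := by
    rw [Real.volume_Icc, show (1:ℝ) - (-1) = 2 by norm_num, ENNReal.ofReal_ofNat]
  simp [h2]

lemma map_uniform_cube (Q : Set (EuclideanSpace ℝ (Fin n)))
    (hQ : Q = {x : EuclideanSpace ℝ (Fin n) | ∀ i, |x i| ≤ 1}) :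
    Measure.map ((MeasurableEquiv.toLp 2 (Fin n → ℝ)).symm)
      ((volume Q)⁻¹ • volume.restrict Q) = Measure.pi (fun _ : Fin n => nu) := by
  have hmp := EuclideanSpace.volume_preserving_symm_measurableEquiv_toLp (ι := Fin n)
  rw [Measure.map_smul, cube_preimage n Q hQ,
    ← Measure.restrict_map ((MeasurableEquiv.toLp 2 (Fin n → ℝ)).symm).measurable
      (MeasurableSet.univ_pi fun _ => measurableSet_Icc), hmp.map_eq,
    ← cube_preimage n Q hQ, volume_cube n Q hQ]
  refine (Measure.pi_eq fun s hs => ?_).symm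
  rw [Measure.smul_apply, Measure.restrict_apply (MeasurableSet.univ_pi hs),
    ← pi_inter_distrib, volume_pi_pi, smul_eq_mul]
  have : ∀ i : Fin n, nu (s i) = 2⁻¹ * volume (s i ∩ Icc (-1) 1) := by
    intro i
    rw [nu, Measure.smul_apply, Measure.restrict_apply (hs i), smul_eq_mul]
  simp only [this]
  rw [Finset.prod_mul_distrib, Finset.prod_const]
  congr 1
  simp [ENNReal.inv_pow]

end Main

section Main
variable (n : ℕ)

noncomputable def Fnorm : (Fin n → ℝ × ℝ) → ℝ :=
  fun w => ‖(fun i => (w i).1 + (w i).2 : Fin n → ℝ)‖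

lemma Fnorm_cont : Continuous (Fnorm n) := by
  apply continuous_norm.comp
  exact continuous_pi fun i =>
    ((continuous_fst.comp (continuous_apply i)).add (continuous_snd.comp (continuous_apply i)))

lemma pi_integral :
    ∫ w, Fnorm n w ∂(Measure.pi fun _ : Fin n => nu.prod nu)
      = 2 - (2 / (2 * n + 1)) * 4 ^ n * ((2 * n).choose n : ℝ)⁻¹ := by
  set π := Measure.pi fun _ : Fin n => nu.prod nu with hπ
  have hFnn : ∀ w, 0 ≤ Fnorm n w := fun w => norm_nonneg _
  have hbox : π (univ.pi fun _ : Fin n => (Icc (-1:ℝ) 1) ×ˢ (Icc (-1:ℝ) 1)) = 1 := by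
    rw [hπ, Measure.pi_pi]
    have : (nu.prod nu) ((Icc (-1:ℝ) 1) ×ˢ (Icc (-1:ℝ) 1)) = 1 := by
      rw [Measure.prod_prod, nu_Icc, one_mul]
    simp only [this, Finset.prod_const, one_pow]
  have hbound : ∀ᵐ w ∂π, w ∈ univ.pi fun _ : Fin n => (Icc (-1:ℝ) 1) ×ˢ (Icc (-1:ℝ) 1) := by
    rw [ae_iff]
    have hms : MeasurableSet (univ.pi fun _ : Fin n => (Icc (-1:ℝ) 1) ×ˢ (Icc (-1:ℝ) 1)) :=
      MeasurableSet.univ_pi fun _ => measurableSet_Icc.prod measurableSet_Icc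
    have : {w | ¬ w ∈ univ.pi fun _ : Fin n => (Icc (-1:ℝ) 1) ×ˢ (Icc (-1:ℝ) 1)}
        = (univ.pi fun _ : Fin n => (Icc (-1:ℝ) 1) ×ˢ (Icc (-1:ℝ) 1))ᶜ := rfl
    rw [this, prob_compl_eq_one_sub hms, hbox, tsub_self]
  have hFle : ∀ w ∈ univ.pi fun _ : Fin n => (Icc (-1:ℝ) 1) ×ˢ (Icc (-1:ℝ) 1),
      Fnorm n w ≤ 2 := by
    intro w hw
    rw [Fnorm, pi_norm_le_iff_of_nonneg (by norm_num : (0:ℝ) ≤ 2)]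
    intro i
    have h1 := (hw i trivial).1
    have h2 := (hw i trivial).2
    rw [mem_Icc] at h1 h2
    rw [Real.norm_eq_abs, abs_le]
    constructor <;> linarith [h1.1, h1.2, h2.1, h2.2]
  have hFint : Integrable (Fnorm n) π := by
    refine (integrable_const (2:ℝ)).mono' (Fnorm_cont n).aestronglyMeasurable ?_
    filter_upwards [hbound] with w hw
    rw [Real.norm_eq_abs, abs_of_nonneg (hFnn w)]
    exact hFle w hw
  rw [hFint.integral_eq_integral_meas_lt (Filter.Eventually.of_forall hFnn)]
  have hset : ∀ t : ℝ, 0 ≤ t → {w : Fin n → ℝ × ℝ | Fnorm n w ≤ t}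
      = univ.pi fun _ : Fin n => {p : ℝ × ℝ | |p.1 + p.2| ≤ t} := by
    intro t ht
    ext w
    rw [mem_setOf_eq, Fnorm, pi_norm_le_iff_of_nonneg ht]
    simp only [mem_pi, mem_univ, forall_true_left, mem_setOf_eq, Real.norm_eq_abs]
  have hmeas_t : ∀ t : ℝ, 0 < t →
      π {w | t < Fnorm n w} = 1 - ((nu.prod nu) {p : ℝ × ℝ | |p.1 + p.2| ≤ t}) ^ n := by
    intro t ht
    have h1 : {w : Fin n → ℝ × ℝ | t < Fnorm n w} = {w | Fnorm n w ≤ t}ᶜ := by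
      ext w; simp [not_le]
    have h2 : MeasurableSet {w : Fin n → ℝ × ℝ | Fnorm n w ≤ t} :=
      (isClosed_le (Fnorm_cont n) continuous_const).measurableSet
    rw [h1, prob_compl_eq_one_sub h2, hset t ht.le, hπ, Measure.pi_pi, Finset.prod_const,
      Finset.card_univ, Fintype.card_fin]
  have hcongr : ∀ t ∈ Ioi (0:ℝ), (π {w | t < Fnorm n w}).toReal
      = (Ioc (0:ℝ) 2).indicator (fun t => 1 - (t * (4 - t) / 4) ^ n) t := by
    intro t ht
    rw [mem_Ioi] at ht
    rcases le_or_gt t 2 with h2 | h2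
    · have ha0 : 0 ≤ t * (4 - t) / 4 :=
        div_nonneg (mul_nonneg ht.le (by linarith)) (by norm_num)
      have ha1 : t * (4 - t) / 4 ≤ 1 := by nlinarith
      rw [hmeas_t t ht, nu_prod_apply t ⟨ht.le, h2⟩, ← ENNReal.ofReal_pow ha0,
        ← ENNReal.ofReal_one, ← ENNReal.ofReal_sub _ (by positivity),
        ENNReal.toReal_ofReal (by linarith [pow_le_one₀ ha0 ha1 (n := n)]),
        indicator_of_mem (mem_Ioc.mpr ⟨ht, h2⟩)]
    · rw [hmeas_t t ht, nu_prod_apply_ge2 t h2.le, one_pow, tsub_self,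
        indicator_of_notMem (by simp [mem_Ioc]; intro; linarith)]
      simp
  simp only [measureReal_def]
  rw [setIntegral_congr_fun measurableSet_Ioi hcongr,
    integral_indicator measurableSet_Ioc, Measure.restrict_restrict measurableSet_Ioc,
    show Ioc (0:ℝ) 2 ∩ Ioi 0 = Ioc 0 2 from
      inter_eq_left.mpr fun x hx => mem_Ioi.mpr hx.1,
    ← intervalIntegral.integral_of_le (by norm_num : (0:ℝ) ≤ 2)]
  have hsub : (∫ t in (0:ℝ)..2, (1 - (t * (4 - t) / 4) ^ n))
      = (∫ t in (0:ℝ)..2, (1:ℝ)) - ∫ t in (0:ℝ)..2, (t * (4 - t) / 4) ^ n := by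
    exact intervalIntegral.integral_sub intervalIntegrable_const
      ((by fun_prop : Continuous fun t : ℝ => (t * (4 - t) / 4) ^ n).intervalIntegrable _ _)
  rw [hsub, kint n, intervalIntegral.integral_const, smul_eq_mul]
  norm_num
end Main

/-- For `X, Y` independent uniform random vectors on the cube `Q_n = [−1,1]^n`,
`E‖X+Y‖_{Q_n} = 2 − (2/(2n+1)) · 4^n · (binom(2n, n))⁻¹`. -/
theorem expected_gauge_sum_cube
    (n : ℕ) (Ω : Type*) [MeasurableSpace Ω] (μ : Measure Ω) [IsProbabilityMeasure μ]
    (Q : Set (EuclideanSpace ℝ (Fin n)))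
    (hQ : Q = {x : EuclideanSpace ℝ (Fin n) | ∀ i, |x i| ≤ 1})
    (X Y : Ω → EuclideanSpace ℝ (Fin n))
    (hX : μ.map X = (volume Q)⁻¹ • volume.restrict Q)
    (hY : μ.map Y = (volume Q)⁻¹ • volume.restrict Q)
    (hindep : ProbabilityTheory.IndepFun X Y μ) :
    (∫ ω, gauge Q (X ω + Y ω) ∂μ)
      = 2 - (2 / (2 * n + 1)) * 4 ^ n * ((2 * n).choose n : ℝ)⁻¹ := by
  set ρ : Measure (EuclideanSpace ℝ (Fin n)) := (volume Q)⁻¹ • volume.restrict Q with hρdef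
  have hρ : IsProbabilityMeasure ρ := by
    constructor
    rw [hρdef, Measure.smul_apply, Measure.restrict_apply MeasurableSet.univ, univ_inter,
      volume_cube n Q hQ, smul_eq_mul]
    exact ENNReal.inv_mul_cancel (by positivity) (by simp)
  have hXm : AEMeasurable X μ := by
    by_contra h
    have h1 : ρ Set.univ = 1 := hρ.measure_univ
    rw [← hX, Measure.map_of_not_aemeasurable h] at h1
    simp at h1
  have hYm : AEMeasurable Y μ := by
    by_contra h
    have h1 : ρ Set.univ = 1 := hρ.measure_univ
    rw [← hY, Measure.map_of_not_aemeasurable h] at h1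
    simp at h1
  have hpair : Measure.map (fun ω => (X ω, Y ω)) μ = ρ.prod ρ := by
    have := (ProbabilityTheory.indepFun_iff_map_prod_eq_prod_map_map hXm hYm).mp hindep
    rw [this, hX, hY]
  set g : EuclideanSpace ℝ (Fin n) × EuclideanSpace ℝ (Fin n) → ℝ :=
    fun z => gauge Q (z.1 + z.2) with hgdef
  have hgeq : g = fun z => supSeminorm n (z.1 + z.2) :=
    funext fun z => gauge_cube n Q hQ _
  have hgcont : Continuous g := by
    rw [hgeq]
    exact (continuous_supSeminorm n).comp (continuous_fst.add continuous_snd)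
  have step1 : (∫ ω, gauge Q (X ω + Y ω) ∂μ) = ∫ z, g z ∂(ρ.prod ρ) := by
    rw [← hpair]
    exact (integral_map (hXm.prodMk hYm) hgcont.aestronglyMeasurable).symm
  set e := (MeasurableEquiv.toLp 2 (Fin n → ℝ)).symm with hedef
  have hρe : Measure.map (⇑e.symm) (Measure.pi fun _ : Fin n => nu) = ρ := by
    rw [← map_uniform_cube n Q hQ, ← hρdef, ← hedef, MeasurableEquiv.map_symm_map]
  set A := MeasurableEquiv.arrowProdEquivProdArrow ℝ ℝ (Fin n) with hAdef
  have harrow : Measure.map (⇑A) (Measure.pi fun _ : Fin n => nu.prod nu)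
      = (Measure.pi fun _ : Fin n => nu).prod (Measure.pi fun _ : Fin n => nu) :=
    (measurePreserving_arrowProdEquivProdArrow ℝ ℝ (Fin n) (fun _ => nu) (fun _ => nu)).map_eq
  have hPm : Measurable (Prod.map ⇑e.symm ⇑e.symm) :=
    e.symm.measurable.prodMap e.symm.measurable
  have step2 : ρ.prod ρ = Measure.map (Prod.map ⇑e.symm ⇑e.symm ∘ ⇑A)
      (Measure.pi fun _ : Fin n => nu.prod nu) := by
    rw [← Measure.map_map hPm A.measurable, harrow,
      ← Measure.map_prod_map _ _ e.symm.measurable e.symm.measurable, hρe]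
  have step3 : (∫ z, g z ∂(ρ.prod ρ))
      = ∫ w, g (Prod.map ⇑e.symm ⇑e.symm (A w)) ∂(Measure.pi fun _ : Fin n => nu.prod nu) := by
    rw [step2]
    exact integral_map (hPm.comp A.measurable).aemeasurable hgcont.aestronglyMeasurable
  have step4 : ∀ w : Fin n → ℝ × ℝ, g (Prod.map ⇑e.symm ⇑e.symm (A w)) = Fnorm n w := by
    intro w
    rw [hgeq]
    rw [show (fun z : EuclideanSpace ℝ (Fin n) × EuclideanSpace ℝ (Fin n)
      => supSeminorm n (z.1 + z.2)) (Prod.map ⇑e.symm ⇑e.symm (A w))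
      = supSeminorm n ((Prod.map ⇑e.symm ⇑e.symm (A w)).1 + (Prod.map ⇑e.symm ⇑e.symm (A w)).2)
      from rfl, supSeminorm_apply]
    rfl
  rw [step1, step3]
  simp only [step4]
  exact pi_integral n
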